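/- For every prime p and every n ≥ 1, there exists a finite group of order exactly p^(n·(p−1)² + 2) that is generated by two elements, each of order exactly p. -/
import Mathlib

open Finset Polynomial

namespace Stmt3Aux

variable {B : Type} [CommRing B]

/-- Truncated geometric sum indexed by `ZMod p`. -/
def Sf (p : ℕ) (x : B) (k : ZMod p) : B := ∑ t ∈ Finset.range (ZMod.val k), x ^ t

/-- Power map indexed by `ZMod p`. -/
def Ef (p : ℕ) (x : B) (k : ZMod p) : B := x ^ (ZMod.val k)

variable {p : ℕ} {x : B}

lemma xp_one (hx : ∑ i ∈ Finset.range p, x ^ i = 0) : x ^ p = 1 := by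
  have h := geom_sum_mul x p
  rw [hx, zero_mul] at h
  exact sub_eq_zero.mp h.symm

lemma pow_mod (hx : ∑ i ∈ Finset.range p, x ^ i = 0) (N : ℕ) :
    x ^ (N % p) = x ^ N := by
  conv_rhs => rw [show N = p * (N / p) + N % p from (Nat.div_add_mod _ _).symm]
  rw [pow_add, pow_mul, xp_one hx, one_pow, one_mul]

lemma sum_mod (hx : ∑ i ∈ Finset.range p, x ^ i = 0) (N : ℕ) :
    ∑ t ∈ Finset.range (N % p), x ^ t = ∑ t ∈ Finset.range N, x ^ t := by
  rcases Nat.eq_zero_or_pos p with hp0 | hp0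
  · subst hp0; rw [Nat.mod_zero]
  induction N using Nat.strong_induction_on with
  | _ N ih =>
    rcases lt_or_ge N p with h | h
    · rw [Nat.mod_eq_of_lt h]
    · have hN : N = (N - p) + p := by omega
      rw [Nat.mod_eq_sub_mod h, ih (N - p) (by omega)]
      conv_rhs => rw [hN]
      rw [Finset.sum_range_add]
      have hz : ∑ i ∈ Finset.range p, x ^ ((N - p) + i) = 0 := by
        simp only [pow_add, ← Finset.mul_sum, hx, mul_zero]
      rw [hz, add_zero]

section ES

variable [NeZero p]

lemma Ef_zero : Ef p x 0 = 1 := by simp [Ef, ZMod.val_zero]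

lemma Sf_zero : Sf p x 0 = 0 := by simp [Sf, ZMod.val_zero]

lemma Ef_one (hp : 1 < p) : Ef p x 1 = x := by
  haveI : Fact (1 < p) := ⟨hp⟩
  rw [Ef, ZMod.val_one p, pow_one]

lemma Sf_one (hp : 1 < p) : Sf p x 1 = 1 := by
  haveI : Fact (1 < p) := ⟨hp⟩
  rw [Sf, ZMod.val_one p]
  simp

lemma Ef_add (hx : ∑ i ∈ Finset.range p, x ^ i = 0) (k l : ZMod p) :
    Ef p x (k + l) = Ef p x k * Ef p x l := by
  rw [Ef, Ef, Ef, ZMod.val_add, pow_mod hx, pow_add]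

lemma Sf_add (hx : ∑ i ∈ Finset.range p, x ^ i = 0) (k l : ZMod p) :
    Sf p x (k + l) = Sf p x k + Ef p x k * Sf p x l := by
  rw [Sf, Sf, Sf, Ef, ZMod.val_add, sum_mod hx, Finset.sum_range_add]
  congr 1
  rw [Finset.mul_sum]
  refine Finset.sum_congr rfl fun i _ => ?_
  rw [pow_add]

lemma Ef_mul_Ef_neg (hx : ∑ i ∈ Finset.range p, x ^ i = 0) (k : ZMod p) :
    Ef p x k * Ef p x (-k) = 1 := by
  rw [← Ef_add hx, add_neg_cancel, Ef_zero]

end ES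

/-- Carrier of the group: a triple. -/
@[ext]
structure GG (p : ℕ) (B : Type) where
  u : ZMod p
  v : ZMod p
  w : B

variable (x y : B)

/-- Multiplication. -/
def gmul (g h : GG p B) : GG p B :=
  ⟨g.u + h.u, g.v + h.v,
    h.w + Ef p x h.u * Ef p y h.v * g.w + Ef p y h.v * Sf p x h.u * Sf p y g.v⟩

/-- Inversion. -/
def ginv (g : GG p B) : GG p B :=
  ⟨-g.u, -g.v,
    -(Ef p x (-g.u) * Ef p y (-g.v) * g.w + Ef p x (-g.u) * Sf p x g.u * Sf p y (-g.v))⟩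

section GroupLaws

variable [NeZero p]
variable (hx : ∑ i ∈ Finset.range p, x ^ i = 0) (hy : ∑ i ∈ Finset.range p, y ^ i = 0)

include hx hy in
lemma gmul_assoc (a b c : GG p B) :
    gmul x y (gmul x y a b) c = gmul x y a (gmul x y b c) := by
  have hcomm : Ef p x c.u * Sf p x b.u + Sf p x c.u = Sf p x b.u + Ef p x b.u * Sf p x c.u := by
    have h1 := Sf_add hx b.u c.u
    have h2 := Sf_add hx c.u b.u
    rw [add_comm c.u b.u] at h2
    linear_combination h1 - h2
  ext
  · exact add_assoc _ _ _
  · exact add_assoc _ _ _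
  · show c.w + Ef p x c.u * Ef p y c.v *
        (b.w + Ef p x b.u * Ef p y b.v * a.w + Ef p y b.v * Sf p x b.u * Sf p y a.v) +
        Ef p y c.v * Sf p x c.u * Sf p y (a.v + b.v) =
      (c.w + Ef p x c.u * Ef p y c.v * b.w + Ef p y c.v * Sf p x c.u * Sf p y b.v) +
        Ef p x (b.u + c.u) * Ef p y (b.v + c.v) * a.w +
        Ef p y (b.v + c.v) * Sf p x (b.u + c.u) * Sf p y a.v
    rw [show a.v + b.v = b.v + a.v from add_comm _ _, Sf_add hy b.v a.v,
      Ef_add hx b.u c.u, Ef_add hy b.v c.v, Sf_add hx b.u c.u]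
    linear_combination (Ef p y b.v * Ef p y c.v * Sf p y a.v) * hcomm

lemma gone_mul (h : GG p B) : gmul x y ⟨0, 0, 0⟩ h = h := by
  ext <;> simp [gmul, Sf_zero]

lemma gmul_one (g : GG p B) : gmul x y g ⟨0, 0, 0⟩ = g := by
  ext <;> simp [gmul, Sf_zero, Ef_zero]

include hx hy in
lemma ginv_mul (g : GG p B) : gmul x y (ginv x y g) g = ⟨0, 0, 0⟩ := by
  ext
  · exact neg_add_cancel _
  · exact neg_add_cancel _
  · show g.w + Ef p x g.u * Ef p y g.v *
        -(Ef p x (-g.u) * Ef p y (-g.v) * g.w + Ef p x (-g.u) * Sf p x g.u * Sf p y (-g.v)) +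
        Ef p y g.v * Sf p x g.u * Sf p y (-g.v) = 0
    have e1 := Ef_mul_Ef_neg hx g.u
    have e2 := Ef_mul_Ef_neg hy g.v
    linear_combination (-(g.w * Ef p y g.v * Ef p y (-g.v))
        - Ef p y g.v * Sf p x g.u * Sf p y (-g.v)) * e1 + (-g.w) * e2

/-- The group structure. -/
def ggroup (hp : 1 < p) : Group (GG p B) where
  mul := gmul x y
  one := ⟨0, 0, 0⟩
  inv := ginv x y
  mul_assoc := gmul_assoc x y hx hy
  one_mul := gone_mul x y
  mul_one := gmul_one x y
  inv_mul_cancel := ginv_mul x y hx hy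

end GroupLaws

lemma natDegree_geomsum {R : Type} [CommRing R] [Nontrivial R] {q : ℕ} (hq : 0 < q) :
    (∑ i ∈ Finset.range q, (X : R[X]) ^ i).natDegree = q - 1 := by
  have h : (∑ i ∈ Finset.range q, (X : R[X]) ^ i)
      = ∑ i ∈ Finset.range (q - 1), X ^ i + X ^ (q - 1) := by
    conv_lhs => rw [show q = (q - 1) + 1 by omega]
    rw [Finset.sum_range_succ]
  have hdeg : (∑ i ∈ Finset.range (q - 1), (X : R[X]) ^ i).degree
      < (X ^ (q - 1) : R[X]).degree := by
    refine lt_of_le_of_lt (degree_sum_le _ _) ?_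
    rw [degree_X_pow, Finset.sup_lt_iff (by exact_mod_cast WithBot.bot_lt_coe _)]
    intro i hi
    rw [degree_X_pow]
    exact_mod_cast Finset.mem_range.mp hi
  rw [h, natDegree_add_eq_right_of_degree_lt hdeg, natDegree_X_pow]

lemma adj_finite {R : Type} [CommRing R] [Finite R] {f : R[X]} (hf : f.Monic) :
    Finite (AdjoinRoot f) := by
  cases nonempty_fintype R
  exact Finite.of_equiv _ (AdjoinRoot.powerBasis' hf).basis.equivFun.toEquiv.symm

lemma adj_nat_card {R : Type} [CommRing R] [Finite R] {f : R[X]} (hf : f.Monic) :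
    Nat.card (AdjoinRoot f) = Nat.card R ^ f.natDegree := by
  cases nonempty_fintype R
  rw [Nat.card_congr (AdjoinRoot.powerBasis' hf).basis.equivFun.toEquiv, Nat.card_fun]
  congr 1
  simp [Nat.card_eq_fintype_card]

/-- Equivalence with triple product. -/
def ggEquiv (p : ℕ) (B : Type) : GG p B ≃ ZMod p × ZMod p × B where
  toFun g := (g.u, g.v, g.w)
  invFun t := ⟨t.1, t.2.1, t.2.2⟩
  left_inv g := rfl
  right_inv t := rfl

end Stmt3Aux
open Finset Polynomial Stmt3Aux in
/-- For every prime `p` and every `n ≥ 1`, there exists a finite group of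
order exactly `p ^ (n * (p - 1) ^ 2 + 2)` that is generated by two elements,
each of order exactly `p`. -/
theorem stmt_3 (p : ℕ) (hp : p.Prime) (n : ℕ) (hn : 1 ≤ n) :
    ∃ (P : Type) (_ : Group P) (_ : Fintype P),
      Fintype.card P = p ^ (n * (p - 1) ^ 2 + 2) ∧
      ∃ a b : P, orderOf a = p ∧ orderOf b = p ∧
        Subgroup.closure ({a, b} : Set P) = ⊤ := by
  haveI : Fact p.Prime := ⟨hp⟩
  have hp1 : 1 < p := hp.one_lt
  haveI : NeZero p := ⟨hp.pos.ne'⟩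
  haveI : NeZero (p ^ n) := ⟨pow_ne_zero n hp.pos.ne'⟩
  haveI : Fact (1 < p ^ n) := ⟨Nat.one_lt_pow (by omega) hp1⟩
  set R := ZMod (p ^ n) with hR
  -- first extension
  have hmonicf : (∑ i ∈ Finset.range p, (X : R[X]) ^ i).Monic :=
    Polynomial.monic_geom_sum_X (by omega)
  set A := AdjoinRoot (∑ i ∈ Finset.range p, (X : R[X]) ^ i) with hA
  haveI finA : Finite A := adj_finite hmonicf
  have cardA : Nat.card A = (p ^ n) ^ (p - 1) := by
    rw [adj_nat_card hmonicf, natDegree_geomsum hp.pos, Nat.card_zmod]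
  haveI : Nontrivial A := by
    rw [← Finite.one_lt_card_iff_nontrivial, cardA]
    exact Nat.one_lt_pow (by omega) (by exact Fact.out)
  -- second extension
  have hmonicg : (∑ i ∈ Finset.range p, (X : A[X]) ^ i).Monic :=
    Polynomial.monic_geom_sum_X (by omega)
  set Bt := AdjoinRoot (∑ i ∈ Finset.range p, (X : A[X]) ^ i) with hB
  haveI finB : Finite Bt := adj_finite hmonicg
  have cardB : Nat.card Bt = p ^ (n * (p - 1) ^ 2) := by
    rw [adj_nat_card hmonicg, natDegree_geomsum hp.pos, cardA, ← pow_mul, ← pow_mul]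
    congr 1
    ring
  set x : Bt := AdjoinRoot.of _ (AdjoinRoot.root (∑ i ∈ Finset.range p, (X : R[X]) ^ i))
    with hxdef
  set y : Bt := AdjoinRoot.root (∑ i ∈ Finset.range p, (X : A[X]) ^ i) with hydef
  have hxA : ∑ i ∈ Finset.range p,
      (AdjoinRoot.root (∑ i ∈ Finset.range p, (X : R[X]) ^ i)) ^ i = 0 := by
    have h := AdjoinRoot.eval₂_root (∑ i ∈ Finset.range p, (X : R[X]) ^ i)
    simpa [Polynomial.eval₂_finset_sum] using h
  have hx : ∑ i ∈ Finset.range p, x ^ i = 0 := by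
    rw [hxdef]
    simp only [← map_pow, ← map_sum, hxA, map_zero]
  have hy : ∑ i ∈ Finset.range p, y ^ i = 0 := by
    have h := AdjoinRoot.eval₂_root (∑ i ∈ Finset.range p, (X : A[X]) ^ i)
    simpa [Polynomial.eval₂_finset_sum] using h
  -- the group
  letI GI : Group (GG p Bt) := ggroup x y hx hy hp1
  haveI finG : Finite (GG p Bt) := Finite.of_equiv _ (ggEquiv p Bt).symm
  haveI ftG : Fintype (GG p Bt) := Fintype.ofFinite _
  refine ⟨GG p Bt, GI, ftG, ?_, ?_⟩
  · rw [← Nat.card_eq_fintype_card, Nat.card_congr (ggEquiv p Bt), Nat.card_prod,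
      Nat.card_prod, Nat.card_zmod, cardB, pow_add]
    ring
  · -- generators and orders
    have mulD : ∀ g h : GG p Bt, g * h = gmul x y g h := fun _ _ => rfl
    have invD : ∀ g : GG p Bt, g⁻¹ = ginv x y g := fun _ => rfl
    have oneD : (1 : GG p Bt) = ⟨0, 0, 0⟩ := rfl
    have hpow_a : ∀ k : ℕ, (⟨1, 0, 0⟩ : GG p Bt) ^ k = ⟨(k : ZMod p), 0, 0⟩ := by
      intro k
      induction k with
      | zero => rw [pow_zero, oneD]; norm_num
      | succ k ih =>
        rw [pow_succ, ih, mulD]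
        ext <;> simp [gmul, Sf_zero, Ef_zero]
    have hpow_b : ∀ k : ℕ, (⟨0, 1, 0⟩ : GG p Bt) ^ k = ⟨0, (k : ZMod p), 0⟩ := by
      intro k
      induction k with
      | zero => rw [pow_zero, oneD]; norm_num
      | succ k ih =>
        rw [pow_succ, ih, mulD]
        ext <;> simp [gmul, Sf_zero, Ef_zero]
    refine ⟨⟨1, 0, 0⟩, ⟨0, 1, 0⟩, ?_, ?_, ?_⟩
    · refine orderOf_eq_prime ?_ ?_
      · rw [hpow_a p, ZMod.natCast_self, oneD]
      · intro h
        rw [oneD] at h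
        simpa using congrArg GG.u h
    · refine orderOf_eq_prime ?_ ?_
      · rw [hpow_b p, ZMod.natCast_self, oneD]
      · intro h
        rw [oneD] at h
        simpa using congrArg GG.v h
    · -- generation
      set H := Subgroup.closure ({⟨1, 0, 0⟩, ⟨0, 1, 0⟩} : Set (GG p Bt)) with hH
      have ha : (⟨1, 0, 0⟩ : GG p Bt) ∈ H := Subgroup.subset_closure (by simp)
      have hb : (⟨0, 1, 0⟩ : GG p Bt) ∈ H := Subgroup.subset_closure (by simp)
      have T0 : (⟨0, 0, (0 : Bt)⟩ : GG p Bt) ∈ H := H.one_mem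
      have Tadd : ∀ m m' : Bt, (⟨0, 0, m⟩ : GG p Bt) ∈ H → (⟨0, 0, m'⟩ : GG p Bt) ∈ H →
          (⟨0, 0, m + m'⟩ : GG p Bt) ∈ H := by
        intro m m' h1 h2
        have h3 := H.mul_mem h1 h2
        rw [mulD] at h3
        have heq : gmul x y (⟨0, 0, m⟩ : GG p Bt) ⟨0, 0, m'⟩ = ⟨0, 0, m + m'⟩ := by
          ext <;> simp [gmul, Sf_zero, Ef_zero, add_comm]
        rwa [heq] at h3
      have Tx : ∀ m : Bt, (⟨0, 0, m⟩ : GG p Bt) ∈ H → (⟨0, 0, x * m⟩ : GG p Bt) ∈ H := by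
        intro m hm
        have h3 := H.mul_mem (H.inv_mem ha) (H.mul_mem hm ha)
        have heq : (⟨1, 0, 0⟩ : GG p Bt)⁻¹ * ((⟨0, 0, m⟩ : GG p Bt) * ⟨1, 0, 0⟩)
            = ⟨0, 0, x * m⟩ := by
          rw [mulD, mulD, invD]
          ext <;> simp [gmul, ginv, Sf_zero, Ef_zero, Ef_one hp1, Sf_one hp1]
        rwa [heq] at h3
      have Ty : ∀ m : Bt, (⟨0, 0, m⟩ : GG p Bt) ∈ H → (⟨0, 0, y * m⟩ : GG p Bt) ∈ H := by
        intro m hm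
        have h3 := H.mul_mem (H.inv_mem hb) (H.mul_mem hm hb)
        have heq : (⟨0, 1, 0⟩ : GG p Bt)⁻¹ * ((⟨0, 0, m⟩ : GG p Bt) * ⟨0, 1, 0⟩)
            = ⟨0, 0, y * m⟩ := by
          rw [mulD, mulD, invD]
          ext <;> simp [gmul, ginv, Sf_zero, Ef_zero, Ef_one hp1, Sf_one hp1]
        rwa [heq] at h3
      have T1 : (⟨0, 0, (1 : Bt)⟩ : GG p Bt) ∈ H := by
        have h3 := H.mul_mem (H.inv_mem (H.mul_mem ha hb)) (H.mul_mem hb ha)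
        have e1 : x * Ef p x (-1) = 1 := by
          have h4 := Ef_mul_Ef_neg hx (1 : ZMod p)
          rwa [Ef_one hp1] at h4
        have heq : ((⟨1, 0, 0⟩ : GG p Bt) * ⟨0, 1, 0⟩)⁻¹ * ((⟨0, 1, 0⟩ : GG p Bt) * ⟨1, 0, 0⟩)
            = ⟨0, 0, (1 : Bt)⟩ := by
          simp only [mulD, invD]
          ext
          · simp [gmul, ginv]
          · simp [gmul, ginv]
          · simp [gmul, ginv, Sf_zero, Ef_zero, Ef_one hp1, Sf_one hp1]
            linear_combination (-(y * Sf p y (-1))) * e1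
        rwa [heq] at h3
      have Tnat : ∀ (k : ℕ) (m : Bt), (⟨0, 0, m⟩ : GG p Bt) ∈ H →
          (⟨0, 0, (k : Bt) * m⟩ : GG p Bt) ∈ H := by
        intro k
        induction k with
        | zero => intro m hm; simpa using T0
        | succ k ih =>
          intro m hm
          have h1 := Tadd _ _ (ih m hm) hm
          have h2 : ((k + 1 : ℕ) : Bt) * m = (k : Bt) * m + m := by push_cast; ring
          rwa [h2]
      have Tmul : ∀ c m : Bt, (⟨0, 0, m⟩ : GG p Bt) ∈ H → (⟨0, 0, c * m⟩ : GG p Bt) ∈ H := by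
        intro c
        induction c using AdjoinRoot.induction_on with
        | ih q =>
          induction q using Polynomial.induction_on with
          | C r =>
            induction r using AdjoinRoot.induction_on with
            | ih q' =>
              induction q' using Polynomial.induction_on with
              | C c0 =>
                intro m hm
                have hcast : AdjoinRoot.mk _ (C (AdjoinRoot.mk _ (C c0)))
                    = ((c0.val : ℕ) : Bt) := by
                  conv_lhs =>
                    rw [show c0 = ((c0.val : ℕ) : R) from (ZMod.natCast_rightInverse c0).symm]
                  rw [map_natCast (Polynomial.C : R →+* R[X]) c0.val,
                    map_natCast (AdjoinRoot.mk _) c0.val,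
                    map_natCast (Polynomial.C : A →+* A[X]) c0.val,
                    map_natCast (AdjoinRoot.mk _) c0.val]
                rw [hcast]
                exact Tnat _ m hm
              | add q1 q2 ih1 ih2 =>
                intro m hm
                rw [map_add, C_add, map_add, add_mul]
                exact Tadd _ _ (ih1 m hm) (ih2 m hm)
              | monomial k c0 ihm =>
                intro m hm
                rw [pow_succ, ← mul_assoc, map_mul, AdjoinRoot.mk_X, C_mul, map_mul,
                  AdjoinRoot.mk_C, mul_assoc]
                exact ihm _ (Tx m hm)
          | add q1 q2 ih1 ih2 =>
            intro m hm
            rw [map_add, add_mul]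
            exact Tadd _ _ (ih1 m hm) (ih2 m hm)
          | monomial k r ihm =>
            intro m hm
            rw [pow_succ, ← mul_assoc, map_mul, AdjoinRoot.mk_X, mul_assoc]
            exact ihm _ (Ty m hm)
      have key : ∀ m : Bt, (⟨0, 0, m⟩ : GG p Bt) ∈ H := by
        intro m
        have h1 := Tmul m 1 T1
        rwa [mul_one] at h1
      rw [Subgroup.eq_top_iff']
      rintro ⟨i, j, m⟩
      have hga : (⟨i, 0, 0⟩ : GG p Bt) ∈ H := by
        have h1 := H.pow_mem ha i.val
        rwa [hpow_a, ZMod.natCast_rightInverse i] at h1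
      have hgb : (⟨0, j, 0⟩ : GG p Bt) ∈ H := by
        have h1 := H.pow_mem hb j.val
        rwa [hpow_b, ZMod.natCast_rightInverse j] at h1
      have heq : (⟨i, 0, 0⟩ : GG p Bt) * ⟨0, j, 0⟩ * ⟨0, 0, m⟩ = ⟨i, j, m⟩ := by
        rw [mulD, mulD]
        ext <;> simp [gmul, Sf_zero, Ef_zero]
      exact heq ▸ H.mul_mem (H.mul_mem hga hgb) (key m)
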